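/- If the group ⟨x,y⟩ generated by elements x and y is good, the cyclic subgroup ⟨x⟩ is normal in ⟨x,y⟩, but ⟨y⟩ is not normal in ⟨x,y⟩, then the order of x is at least 4, the order of y is at most 4, and y⁻¹xy = x⁻¹. -/

import Mathlib

/-- A group is *dihedral* if it is isomorphic to some `DihedralGroup n` with `n ≠ 0`. -/
def IsDihedralGroup (Q : Type*) [Group Q] : Prop :=
  ∃ n : ℕ, n ≠ 0 ∧ Nonempty (Q ≃* DihedralGroup n)

/-- A 2-group `G` is *good* if for all `g h : G` the subgroup `⟨g²⟩` is normal in `G`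
and the quotient `⟨g,h⟩/⟨g²⟩` is abelian or dihedral. -/
def IsGood (G : Type*) [Group G] : Prop :=
  IsPGroup 2 G ∧
  ∀ g h : G, ∃ hn : (Subgroup.zpowers (g ^ 2)).Normal,
    haveI := hn.subgroupOf (Subgroup.closure {g, h})
    (∀ x y : ↥(Subgroup.closure {g, h}) ⧸
        (Subgroup.zpowers (g ^ 2)).subgroupOf (Subgroup.closure {g, h}), x * y = y * x) ∨
    IsDihedralGroup (↥(Subgroup.closure {g, h}) ⧸
        (Subgroup.zpowers (g ^ 2)).subgroupOf (Subgroup.closure {g, h}))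

namespace Good44
lemma copr2 {b : ℤ} (h : Odd b) : IsCoprime (2:ℤ) b :=
  (Int.prime_two.coprime_iff_not_dvd).mpr (fun hd => (Int.not_odd_iff_even.mpr (even_iff_two_dvd.mpr hd)) h)

lemma half_odd {a : ℕ} (ha : 1 ≤ a) {u : ℤ} (h1 : (2:ℤ)^(a-1) ∣ u) (h2 : ¬((2:ℤ)^a ∣ u)) :
    ∃ t : ℤ, Odd t ∧ u = 2^(a-1) * t := by
  obtain ⟨t, rfl⟩ := h1
  refine ⟨t, ?_, rfl⟩
  rcases Int.even_or_odd t with ⟨s, rfl⟩ | h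
  · exfalso; apply h2
    have h2a : (2:ℤ)^a = 2^(a-1) * 2 := by
      rw [← pow_succ]; congr 1; omega
    exact ⟨s, by rw [h2a]; ring⟩
  · exact h

lemma two_half {a : ℕ} (ha : 1 ≤ a) {u : ℤ} (h1 : (2:ℤ)^a ∣ 2*u) (h2 : ¬((2:ℤ)^a ∣ u)) :
    ∃ t : ℤ, Odd t ∧ u = 2^(a-1) * t := by
  apply half_odd ha _ h2
  have h2a : (2:ℤ)^a = 2 * 2^(a-1) := by
    rw [← pow_succ']; congr 1; omega
  rw [h2a] at h1
  exact (mul_dvd_mul_iff_left (by norm_num : (2:ℤ) ≠ 0)).mp h1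

lemma dvd_split {a : ℕ} (ha : 2 ≤ a) {k : ℤ} (hk : Odd k) (h : (2:ℤ)^a ∣ (k-1)*(k+1)) :
    (2:ℤ)^(a-1) ∣ k - 1 ∨ (2:ℤ)^(a-1) ∣ k + 1 := by
  obtain ⟨m, rfl⟩ := hk
  have h' : (2:ℤ)^(a-2) * 4 ∣ (2*m) * (2*(m+1)) := by
    rw [show (2:ℤ)^(a-2)*4 = 2^a by
      rw [show (4:ℤ) = 2^2 by norm_num, ← pow_add]; congr 1; omega]
    convert h using 2 <;> ring
  have h'' : (2:ℤ)^(a-2) ∣ m * (m+1) := by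
    rcases h' with ⟨t, ht⟩
    exact ⟨t, by linarith [ht]⟩
  have hpow : (2:ℤ)^(a-1) = 2^(a-2) * 2 := by rw [← pow_succ]; congr 1; omega
  rcases Int.even_or_odd m with hev | hodd
  · left
    have hm1 : Odd (m+1) := Even.add_one hev
    obtain ⟨t, ht⟩ := ((copr2 hm1).pow_left).dvd_of_dvd_mul_right h''
    exact ⟨t, by rw [hpow]; linarith⟩
  · right
    have h''' : (2:ℤ)^(a-2) ∣ (m+1) * m := by rwa [mul_comm] at h''
    obtain ⟨t, ht⟩ := ((copr2 hodd).pow_left).dvd_of_dvd_mul_right h'''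
    exact ⟨t, by rw [hpow]; linarith⟩
open Subgroup DihedralGroup

variable {G : Type*} [Group G]

lemma commute_all {x y c : G} (hgen : Subgroup.closure {x, y} = ⊤)
    (h1 : Commute c x) (h2 : Commute c y) (g : G) : Commute c g := by
  have hg : g ∈ Subgroup.closure ({x, y} : Set G) := by rw [hgen]; trivial
  induction hg using Subgroup.closure_induction with
  | mem z hz => rcases hz with rfl | rfl; exacts [h1, h2]
  | one => exact Commute.one_right c
  | mul a b _ _ ha hb => exact ha.mul_right hb
  | inv a _ ha => exact ha.inv_right

lemma normal_of_conj {x y : G} (hgen : Subgroup.closure {x, y} = ⊤)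
    (h1 : x⁻¹ * y * x ∈ zpowers y) (h2 : x * y * x⁻¹ ∈ zpowers y) :
    (zpowers y).Normal := by
  rw [← Subgroup.normalizer_eq_top_iff, eq_top_iff, ← hgen, Subgroup.closure_le]
  rintro z hz
  rw [SetLike.mem_coe, Subgroup.mem_normalizer_iff]
  rcases hz with rfl | rfl
  · obtain ⟨t2, ht2⟩ := Subgroup.mem_zpowers_iff.mp h2
    obtain ⟨t1, ht1⟩ := Subgroup.mem_zpowers_iff.mp h1
    intro h
    constructor
    · intro hmem
      obtain ⟨m, hm⟩ := Subgroup.mem_zpowers_iff.mp hmem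
      refine Subgroup.mem_zpowers_iff.mpr ⟨t2 * m, ?_⟩
      rw [zpow_mul, ht2, conj_zpow, hm]
    · intro hmem
      obtain ⟨m, hm⟩ := Subgroup.mem_zpowers_iff.mp hmem
      refine Subgroup.mem_zpowers_iff.mpr ⟨t1 * m, ?_⟩
      rw [zpow_mul, ht1]
      have hc : (z⁻¹ * y * z) ^ m = z⁻¹ * y ^ m * z := by
        rw [show z⁻¹ * y * z = z⁻¹ * y * z⁻¹⁻¹ by rw [inv_inv], conj_zpow, inv_inv]
      rw [hc, hm]
      group
  · exact Subgroup.le_normalizer (Subgroup.mem_zpowers z)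

lemma invol_zpow {g : G} (h : g ^ 2 = 1) {m : ℤ} (hm : Odd m) : g ^ m = g := by
  obtain ⟨t, rfl⟩ := hm
  have h2 : g ^ (2:ℤ) = 1 := by
    rw [show ((2:ℤ)) = ((2:ℕ):ℤ) by norm_num, zpow_natCast, h]
  calc g ^ (2*t+1) = (g^(2:ℤ))^t * g^(1:ℤ) := by rw [← zpow_mul, ← zpow_add]
  _ = g := by rw [h2, one_zpow, one_mul, zpow_one]

lemma invol_zpow_even {g : G} (h : g ^ 2 = 1) {m : ℤ} (hm : Even m) : g ^ m = 1 := by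
  obtain ⟨t, rfl⟩ := hm
  have h2 : g ^ (2:ℤ) = 1 := by
    rw [show ((2:ℤ)) = ((2:ℕ):ℤ) by norm_num, zpow_natCast, h]
  rw [show t + t = 2 * t by ring, zpow_mul, h2, one_zpow]

lemma zpow_eq_of_dvd {x : G} {m m' : ℤ} (h : (orderOf x : ℤ) ∣ m - m') : x ^ m = x ^ m' := by
  have h1 := orderOf_dvd_iff_zpow_eq_one.mp h
  rw [zpow_sub] at h1
  exact mul_inv_eq_one.mp h1

lemma r_pow {n : ℕ} (i : ZMod n) (m : ℕ) : (r i) ^ m = r ((m : ZMod n) * i) := by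
  induction m with
  | zero => simp
  | succ t ih => rw [pow_succ, ih, r_mul_r]; congr 1; push_cast; ring

lemma r_inv {n : ℕ} (i : ZMod n) : (r i)⁻¹ = r (-i) :=
  inv_eq_of_mul_eq_one_right (by rw [r_mul_r, add_neg_cancel]; rfl)

lemma r_zpow {n : ℕ} (i : ZMod n) (m : ℤ) : (r i) ^ m = r ((m : ZMod n) * i) := by
  cases m with
  | ofNat t =>
      rw [Int.ofNat_eq_natCast, zpow_natCast, r_pow]
      congr 1; push_cast; ring
  | negSucc t =>
      rw [zpow_negSucc, r_pow, r_inv]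
      congr 1; push_cast; ring

lemma sr_sq {n : ℕ} (i : ZMod n) : (sr i) ^ 2 = 1 := by
  rw [pow_two, sr_mul_sr, sub_self]; rfl

lemma central_sq_eq_one {n : ℕ} (c : DihedralGroup n) (h : ∀ g, c * g = g * c) : c ^ 2 = 1 := by
  cases c with
  | r i =>
      have hh := h (sr 0)
      rw [r_mul_sr, sr_mul_r] at hh
      have hi : (0:ZMod n) - i = 0 + i := by injection hh
      have hni : -i = i := by rwa [zero_sub, zero_add] at hi
      rw [pow_two, r_mul_r, neg_eq_iff_add_eq_zero.mp hni]; rfl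
  | sr i => exact sr_sq i

lemma r_central {n : ℕ} {i : ZMod n} (h : i + i = 0) (g : DihedralGroup n) :
    r i * g = g * r i := by
  have hni : -i = i := neg_eq_iff_add_eq_zero.mpr h
  cases g with
  | r j => rw [r_mul_r, r_mul_r, add_comm]
  | sr j => rw [r_mul_sr, sr_mul_r, sub_eq_add_neg, hni]



lemma keyW (hgood : IsGood G) {y u w : G}
    (hw_y : w ∈ zpowers y) (hwc : ∀ g : G, Commute w g)
    (huy : y⁻¹ * u * y = u⁻¹) (hsq : (u * w) ^ 2 = 1) (hu2 : u ^ 2 ≠ 1) (hw2 : w ^ 2 ≠ 1) :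
    False := by
  obtain ⟨hn, hdisj⟩ := hgood.2 (u * w) y
  haveI := hn.subgroupOf (Subgroup.closure {u * w, y})
  set H := Subgroup.closure ({u * w, y} : Set G) with hH
  set K := (Subgroup.zpowers ((u * w) ^ 2)).subgroupOf H with hK
  have huwH : u * w ∈ H := Subgroup.subset_closure (by left; rfl)
  have hyH : y ∈ H := Subgroup.subset_closure (by right; rfl)
  have hwH : w ∈ H := (Subgroup.zpowers_le.mpr hyH) hw_y
  have huH : u ∈ H := by
    have he : (u * w) * w⁻¹ = u := by group
    rw [← he]; exact mul_mem huwH (inv_mem hwH)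
  have hbot : Subgroup.zpowers ((u * w) ^ 2) = ⊥ := by rw [hsq, Subgroup.zpowers_one_eq_bot]
  have hker : ∀ g : ↥H, (QuotientGroup.mk' K g = 1) ↔ (g : G) = 1 := by
    intro g
    rw [show QuotientGroup.mk' K g = (g : ↥H ⧸ K) from rfl, QuotientGroup.eq_one_iff,
      hK, Subgroup.mem_subgroupOf, hbot, Subgroup.mem_bot]
  set ut : ↥H := ⟨u, huH⟩
  set yt : ↥H := ⟨y, hyH⟩
  set wt : ↥H := ⟨w, hwH⟩
  rcases hdisj with hab | ⟨d, hd0, ⟨E⟩⟩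
  · have hcm := hab (QuotientGroup.mk' K ut) (QuotientGroup.mk' K yt)
    have h1 : QuotientGroup.mk' K (ut * yt * ut⁻¹ * yt⁻¹) = 1 := by
      simp only [map_mul, map_inv]
      rw [hcm]
      group
    have h3 : u * y * u⁻¹ * y⁻¹ = 1 := (hker _).mp h1
    have hc : u * y = y * u := by
      have h4 : (u * y * u⁻¹ * y⁻¹) * (y * u) = 1 * (y * u) := by rw [h3]
      rw [one_mul] at h4
      calc u * y = (u * y * u⁻¹ * y⁻¹) * (y * u) := by group
      _ = y * u := h4
    have hcuy : y⁻¹ * u * y = u := by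
      rw [mul_assoc, hc, ← mul_assoc, inv_mul_cancel, one_mul]
    have hiu : u = u⁻¹ := hcuy.symm.trans huy
    refine hu2 ?_
    rw [pow_two]
    nth_rewrite 2 [hiu]
    group
  · set F := E.toMonoidHom.comp (QuotientGroup.mk' K) with hF
    have hFsurj : Function.Surjective F := E.surjective.comp (QuotientGroup.mk'_surjective K)
    have hFc : ∀ gD : DihedralGroup d, F wt * gD = gD * F wt := by
      intro gD
      obtain ⟨ht, rfl⟩ := hFsurj gD
      rw [← map_mul, ← map_mul]
      congr 1
      exact Subtype.ext (hwc (ht : G))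
    have hsq1 : F wt ^ 2 = 1 := central_sq_eq_one _ hFc
    have hq : QuotientGroup.mk' K (wt ^ 2) = 1 := by
      have h5 : F (wt ^ 2) = 1 := by rw [map_pow, hsq1]
      rw [hF, MonoidHom.comp_apply] at h5
      exact (MulEquiv.map_eq_one_iff E).mp h5
    have hcoe : ((wt ^ 2 : ↥H) : G) = 1 := (hker _).mp hq
    refine hw2 ?_
    rw [← hcoe]; rfl
lemma orderOf_conj' (g h : G) : orderOf (g * h * g⁻¹) = orderOf h :=
  (SemiconjBy.orderOf_eq g (show SemiconjBy g h (g*h*g⁻¹) from by unfold SemiconjBy; group)).symm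

lemma sr_inv {n : ℕ} (i : ZMod n) : (sr i)⁻¹ = sr i :=
  inv_eq_of_mul_eq_one_right (by rw [sr_mul_sr, sub_self]; rfl)

lemma half_sq {x : G} {a : ℕ} (hax : orderOf x = 2^a) (ha1 : 1 ≤ a) :
    (x ^ ((2:ℤ)^(a-1))) ^ 2 = 1 := by
  rw [← zpow_natCast (x ^ ((2:ℤ)^(a-1))) 2, ← zpow_mul]
  apply orderOf_dvd_iff_zpow_eq_one.mp
  rw [hax]; push_cast
  refine ⟨1, ?_⟩
  rw [mul_one, ← pow_succ]
  norm_num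
  congr 1
  omega

lemma half_ne {x : G} {a : ℕ} (hax : orderOf x = 2^a) (ha1 : 1 ≤ a) :
    x ^ ((2:ℤ)^(a-1)) ≠ 1 := by
  intro h
  have h1 := orderOf_dvd_iff_zpow_eq_one.mpr h
  rw [hax] at h1
  have h3 : (2:ℕ)^a ∣ 2^(a-1) := by exact_mod_cast h1
  have h4 := Nat.le_of_dvd (by positivity) h3
  have h5 : (2:ℕ)^(a-1) < 2^a := Nat.pow_lt_pow_right (by norm_num) (by omega)
  omega

lemma invol_in_cyclic {x : G} {a : ℕ} (ha1 : 1 ≤ a) (hax : orderOf x = 2^a)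
    {ζ : G} (hζ1 : ζ ≠ 1) (hζ2 : ζ ^ 2 = 1) {m : ℤ} (hm : x ^ m = ζ) :
    ζ = x ^ ((2:ℤ)^(a-1)) := by
  have hd1 : ¬ ((2:ℤ)^a ∣ m) := by
    intro hdd
    apply hζ1
    rw [← hm]
    apply orderOf_dvd_iff_zpow_eq_one.mp
    rw [hax]; push_cast; exact hdd
  have hd2 : (2:ℤ)^a ∣ 2*m := by
    have h1 : x ^ (2*m) = 1 := by
      rw [mul_comm, zpow_mul, hm]
      rw [show ((2:ℤ)) = ((2:ℕ):ℤ) from by norm_num, zpow_natCast, hζ2]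
    have h2 := orderOf_dvd_iff_zpow_eq_one.mpr h1
    rw [hax] at h2; push_cast at h2; exact h2
  obtain ⟨s, hos, hse⟩ := two_half ha1 hd2 hd1
  rw [← hm, hse, zpow_mul]
  exact invol_zpow (half_sq hax ha1) hos

lemma pairBot (hgood : IsGood G) {x y : G}
    (hsq : (x*y)^2 = 1) (hx2 : x^2 ≠ 1) (hy2 : y^2 ≠ 1) (hxy : x*y ≠ y*x) : False := by
  obtain ⟨hn, hdisj⟩ := hgood.2 (x*y) y
  haveI := hn.subgroupOf (Subgroup.closure {x*y, y})
  set H := Subgroup.closure ({x*y, y} : Set G) with hH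
  set K := (Subgroup.zpowers ((x*y)^2)).subgroupOf H with hK
  have hxyH : x*y ∈ H := Subgroup.subset_closure (by left; rfl)
  have hyH : y ∈ H := Subgroup.subset_closure (by right; rfl)
  have hxH : x ∈ H := by
    have he : (x*y)*y⁻¹ = x := by group
    rw [← he]; exact mul_mem hxyH (inv_mem hyH)
  have hbot : Subgroup.zpowers ((x*y)^2) = ⊥ := by rw [hsq, Subgroup.zpowers_one_eq_bot]
  have hker : ∀ g : ↥H, (QuotientGroup.mk' K g = 1) ↔ (g : G) = 1 := by
    intro g
    rw [show QuotientGroup.mk' K g = (g : ↥H ⧸ K) from rfl, QuotientGroup.eq_one_iff,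
      hK, Subgroup.mem_subgroupOf, hbot, Subgroup.mem_bot]
  set xt : ↥H := ⟨x, hxH⟩
  set yt : ↥H := ⟨y, hyH⟩
  rcases hdisj with hab | ⟨d, hd0, ⟨E⟩⟩
  · have hcm := hab (QuotientGroup.mk' K xt) (QuotientGroup.mk' K yt)
    have h1 : QuotientGroup.mk' K (xt * yt * xt⁻¹ * yt⁻¹) = 1 := by
      simp only [map_mul, map_inv]
      rw [hcm]
      group
    have h3 : x * y * x⁻¹ * y⁻¹ = 1 := (hker _).mp h1
    apply hxy
    calc x*y = (x*y*x⁻¹*y⁻¹)*(y*x) := by group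
    _ = y*x := by rw [h3, one_mul]
  · set F := E.toMonoidHom.comp (QuotientGroup.mk' K) with hF
    have hFinj : ∀ g : ↥H, F g = 1 → (g:G) = 1 := fun g hg =>
      (hker g).mp ((MulEquiv.map_eq_one_iff E).mp hg)
    have hrx : ∃ i, F xt = r i := by
      cases hc : F xt with
      | r i => exact ⟨i, rfl⟩
      | sr i =>
          exfalso; apply hx2
          have h1 : F (xt^2) = 1 := by rw [map_pow, hc, sr_sq]
          have h2 := hFinj _ h1
          rw [Subgroup.coe_pow] at h2
          exact h2
    have hry : ∃ j, F yt = r j := by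
      cases hc : F yt with
      | r j => exact ⟨j, rfl⟩
      | sr j =>
          exfalso; apply hy2
          have h1 : F (yt^2) = 1 := by rw [map_pow, hc, sr_sq]
          have h2 := hFinj _ h1
          rw [Subgroup.coe_pow] at h2
          exact h2
    obtain ⟨i, hi⟩ := hrx
    obtain ⟨j, hj⟩ := hry
    apply hxy
    have h0 : F (xt*yt) = F (yt*xt) := by
      rw [map_mul, map_mul, hi, hj, r_mul_r, r_mul_r, add_comm]
    have h1 : F ((xt*yt)*(yt*xt)⁻¹) = 1 := by rw [map_mul, map_inv, h0]; group
    have h2 := hFinj _ h1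
    have h3 : (x*y)*(y*x)⁻¹ = 1 := h2
    calc x*y = ((x*y)*(y*x)⁻¹)*(y*x) := by group
    _ = y*x := by rw [h3, one_mul]

end Good44

open Good44 Subgroup DihedralGroup

/-- **Lemma 4.4**: if `⟨x,y⟩` is good, `⟨x⟩` is normal in it but `⟨y⟩` is not, then
`|x| ≥ 4 ≥ |y|` and `xʸ = x⁻¹`. -/
theorem good_normal_cyclic_inverted (G : Type*) [Group G] (hgood : IsGood G)
    (x y : G) (hgen : Subgroup.closure {x, y} = ⊤)
    (hx : (Subgroup.zpowers x).Normal) (hy : ¬ (Subgroup.zpowers y).Normal) :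
    4 ≤ orderOf x ∧ orderOf y ≤ 4 ∧ y⁻¹ * x * y = x⁻¹ := by
  obtain ⟨hp2, hpairs⟩ := hgood
  have hgood' : IsGood G := ⟨hp2, hpairs⟩
  have hxy : x * y ≠ y * x := by
    intro hc
    apply hy
    apply normal_of_conj hgen
    · refine Subgroup.mem_zpowers_iff.mpr ⟨1, ?_⟩
      rw [zpow_one, mul_assoc, ← hc, ← mul_assoc, inv_mul_cancel, one_mul]
    · refine Subgroup.mem_zpowers_iff.mpr ⟨1, ?_⟩
      rw [zpow_one]
      have hcc : Commute x y := hc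
      rw [mul_assoc, ← hcc.inv_left.eq]
      group
  have hfin2 : ∀ g : G, ∃ c : ℕ, orderOf g = 2 ^ c := by
    intro g
    obtain ⟨m, hm⟩ := hp2 g
    obtain ⟨c, _, hceq⟩ := (Nat.dvd_prime_pow Nat.prime_two).mp (orderOf_dvd_of_pow_eq_one hm)
    exact ⟨c, hceq⟩
  obtain ⟨a, hax⟩ := hfin2 x
  have hx1 : x ≠ 1 := by
    intro h
    exact hxy (by rw [h, one_mul, mul_one])
  have ha1 : 1 ≤ a := by
    by_contra h
    have h0 : a = 0 := by omega
    rw [h0, pow_zero] at hax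
    exact hx1 (orderOf_eq_one_iff.mp hax)
  have hid : x ^ ((2:ℤ)^a) = 1 := by
    apply orderOf_dvd_iff_zpow_eq_one.mp
    rw [hax]; push_cast; exact dvd_rfl
  have hconj : y⁻¹ * x * y ∈ zpowers x := by
    have h1 := hx.conj_mem x (Subgroup.mem_zpowers x) y⁻¹
    rwa [inv_inv] at h1
  obtain ⟨k, hk⟩ := Subgroup.mem_zpowers_iff.mp hconj
  have hconjm : ∀ m : ℤ, y⁻¹ * x ^ m * y = x ^ (k * m) := by
    intro m
    have h1 : y⁻¹ * x ^ m * y = (y⁻¹ * x * y) ^ m := by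
      rw [show y⁻¹ * x * y = y⁻¹ * x * y⁻¹⁻¹ from by rw [inv_inv], conj_zpow, inv_inv]
    rw [h1, ← hk, ← zpow_mul]
  have hkodd : Odd k := by
    rcases Int.even_or_odd k with hev | hod
    · exfalso
      obtain ⟨t, ht⟩ := hev
      have h1 : (y⁻¹*x*y) ^ ((2:ℤ)^(a-1)) = 1 := by
        rw [← hk, ← zpow_mul]
        apply orderOf_dvd_iff_zpow_eq_one.mp
        rw [hax]; push_cast
        refine ⟨t, ?_⟩
        rw [ht, show ((2:ℤ)^a) = 2^(a-1)*2 from by rw [← pow_succ]; congr 1; omega]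
        ring
      have h2 := orderOf_dvd_iff_zpow_eq_one.mpr h1
      rw [show y⁻¹*x*y = y⁻¹*x*y⁻¹⁻¹ from by rw [inv_inv], orderOf_conj', hax] at h2
      have h3 : (2:ℕ)^a ∣ 2^(a-1) := by exact_mod_cast h2
      have h4 := Nat.le_of_dvd (by positivity) h3
      have h5 : (2:ℕ)^(a-1) < 2^a := Nat.pow_lt_pow_right (by norm_num) (by omega)
      omega
    · exact hod
  have ha2 : 2 ≤ a := by
    by_contra h
    have ha1' : a = 1 := by omega
    have hx2 : x ^ 2 = 1 := by
      have h1 := pow_orderOf_eq_one x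
      rwa [hax, ha1', pow_one] at h1
    have h2 : y⁻¹ * x * y = x := by rw [← hk, invol_zpow hx2 hkodd]
    apply hxy
    calc x * y = y * (y⁻¹ * x * y) := by group
    _ = y * x := by rw [h2]
  have hk1 : ¬ ((2:ℤ)^a ∣ k - 1) := by
    intro hd
    have h1 : x ^ (k:ℤ) = x ^ (1:ℤ) := zpow_eq_of_dvd (by rw [hax]; push_cast; exact hd)
    rw [zpow_one] at h1
    rw [h1] at hk
    apply hxy
    calc x * y = y * (y⁻¹ * x * y) := by group
    _ = y * x := by rw [← hk]
  set z := x ^ ((2:ℤ)^(a-1)) with hzdef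
  have hz2 : z ^ 2 = 1 := half_sq hax ha1
  have hz1 : z ≠ 1 := half_ne hax ha1
  set u := x ^ ((2:ℤ)^(a-2)) with hudef
  have hu2z : u ^ 2 = z := by
    rw [hudef, hzdef, ← zpow_natCast (x ^ ((2:ℤ)^(a-2))) 2, ← zpow_mul]
    congr 1
    push_cast
    rw [← pow_succ]
    congr 1
    omega
  have hx2ne : x ^ 2 ≠ 1 := by
    intro h
    have h1 := orderOf_dvd_of_pow_eq_one h
    rw [hax] at h1
    have h2 := Nat.le_of_dvd (by norm_num) h1
    have h3 : (2:ℕ)^2 ≤ 2^a := Nat.pow_le_pow_right (by norm_num) ha2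
    omega
  -- ===== main dichotomy =====
  have key : (2:ℤ)^a ∣ k + 1 := by
    by_cases hdone : (2:ℤ)^a ∣ k + 1
    · exact hdone
    exfalso
    obtain ⟨hn, hdisj⟩ := hpairs y x
    haveI := hn.subgroupOf (Subgroup.closure {y, x})
    set H := Subgroup.closure ({y, x} : Set G) with hH
    have hHtop : H = ⊤ := by rw [hH, Set.pair_comm, hgen]
    set K := (Subgroup.zpowers (y^2)).subgroupOf H with hK
    have hxH : x ∈ H := by rw [hHtop]; trivial
    have hyH : y ∈ H := by rw [hHtop]; trivial
    have hker : ∀ g : ↥H, (QuotientGroup.mk' K g = 1) ↔ (g : G) ∈ Subgroup.zpowers (y^2) := by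
      intro g
      rw [show QuotientGroup.mk' K g = (g : ↥H ⧸ K) from rfl, QuotientGroup.eq_one_iff,
        hK, Subgroup.mem_subgroupOf]
    set xt : ↥H := ⟨x, hxH⟩ with hxt
    set yt : ↥H := ⟨y, hyH⟩ with hyt
    have hsub : Subgroup.zpowers (y^2) ≤ Subgroup.zpowers y :=
      Subgroup.zpowers_le.mpr ((Subgroup.zpowers y).pow_mem (Subgroup.mem_zpowers y) 2)
    have himq : QuotientGroup.mk' K xt * QuotientGroup.mk' K yt
        = QuotientGroup.mk' K yt * QuotientGroup.mk' K xt → False := by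
      intro hq
      apply hy
      apply normal_of_conj hgen
      · have h1 : QuotientGroup.mk' K (yt⁻¹ * xt⁻¹ * yt * xt) = 1 := by
          simp only [map_mul, map_inv]
          rw [mul_assoc, ← hq]
          group
        have c1 : y⁻¹ * x⁻¹ * y * x ∈ Subgroup.zpowers (y^2) := (hker _).mp h1
        have e1 : x⁻¹ * y * x = y * (y⁻¹ * x⁻¹ * y * x) := by group
        rw [e1]
        exact Subgroup.mul_mem _ (Subgroup.mem_zpowers y) (hsub c1)
      · have hcm : Commute (QuotientGroup.mk' K xt) (QuotientGroup.mk' K yt) := hq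
        have h1 : QuotientGroup.mk' K (yt⁻¹ * xt * yt * xt⁻¹) = 1 := by
          simp only [map_mul, map_inv]
          rw [mul_assoc, ← hcm.inv_left.eq]
          group
        have c2 : y⁻¹ * x * y * x⁻¹ ∈ Subgroup.zpowers (y^2) := (hker _).mp h1
        have e2 : x * y * x⁻¹ = y * (y⁻¹ * x * y * x⁻¹) := by group
        rw [e2]
        exact Subgroup.mul_mem _ (Subgroup.mem_zpowers y) (hsub c2)
    rcases hdisj with hab | ⟨d, hd0, ⟨E⟩⟩
    · exact himq (hab _ _)
    set F := E.toMonoidHom.comp (QuotientGroup.mk' K) with hF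
    have himqF : F xt * F yt = F yt * F xt → False := by
      intro h
      apply himq
      apply E.injective
      rw [map_mul, map_mul]
      exact h
    have hrel : (F yt)⁻¹ * F xt * F yt = (F xt) ^ (k:ℤ) := by
      have hHrel : yt⁻¹ * xt * yt = xt ^ (k:ℤ) := by
        apply Subtype.ext
        simp only [MulMemClass.coe_mul, InvMemClass.coe_inv, SubgroupClass.coe_zpow]
        exact hk.symm
      rw [← map_inv, ← map_mul, ← map_mul, hHrel, map_zpow]
    have hXord : (F xt) ^ ((2:ℤ)^a) = 1 := by
      rw [← map_zpow]
      rw [show xt ^ ((2:ℤ)^a) = 1 from Subtype.ext (by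
        simp only [SubgroupClass.coe_zpow, OneMemClass.coe_one]; exact hid)]
      exact map_one F
    cases hXc : F xt with
    | sr i =>
        cases hYc : F yt with
        | r j =>
            rw [hXc, hYc, r_inv, r_mul_sr, sr_mul_r, invol_zpow (sr_sq i) hkodd] at hrel
            have hEq : i - -j + j = i := by injection hrel
            have h2j : j + j = 0 := by linear_combination hEq
            apply himqF
            rw [hXc, hYc]
            exact (r_central h2j (sr i)).symm
        | sr j =>
            rw [hXc, hYc, sr_inv, sr_mul_sr, r_mul_sr, invol_zpow (sr_sq i) hkodd] at hrel
            have hEq : j - (i - j) = i := by injection hrel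
            apply himqF
            rw [hXc, hYc, sr_mul_sr, sr_mul_sr]
            congr 1
            linear_combination hEq
    | r i =>
        cases hYc : F yt with
        | r j =>
            apply himqF
            rw [hXc, hYc, r_mul_r, r_mul_r, add_comm]
        | sr j =>
            rw [hXc, hYc, sr_inv, sr_mul_r, sr_mul_sr, Good44.r_zpow] at hrel
            have hEq : j - (j + i) = (k:ZMod d) * i := by injection hrel
            have hXk1 : (F xt) ^ (k+1:ℤ) = 1 := by
              rw [hXc, Good44.r_zpow, show ((k+1:ℤ) : ZMod d) * i = 0 from by
                push_cast
                rw [add_mul, one_mul, ← hEq]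
                ring]
              rfl
            have hN : x ^ (k+1:ℤ) ∈ Subgroup.zpowers (y^2) := by
              have h1 : F (xt ^ (k+1:ℤ)) = 1 := by rw [map_zpow, hXk1]
              have h2 : QuotientGroup.mk' K (xt ^ (k+1:ℤ)) = 1 :=
                (MulEquiv.map_eq_one_iff E).mp h1
              have h3 := (hker _).mp h2
              rwa [SubgroupClass.coe_zpow] at h3
            have hYcomm : ∀ g ∈ Subgroup.zpowers (y^2), y⁻¹ * g * y = g := by
              intro g hg
              obtain ⟨t, ht⟩ := Subgroup.mem_zpowers_iff.mp hg
              rw [← ht]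
              have hyt2 : y * (y^2)^(t:ℤ) = (y^2)^(t:ℤ) * y :=
                (((Commute.refl y).pow_right 2).zpow_right t).eq
              rw [mul_assoc, ← hyt2, ← mul_assoc, inv_mul_cancel, one_mul]
            have hk2 : (2:ℤ)^a ∣ (k-1)*(k+1) := by
              have h5 := hconjm (k+1)
              rw [hYcomm _ hN] at h5
              have h6 : x ^ ((k*(k+1)) - (k+1) : ℤ) = 1 := by
                rw [zpow_sub, ← h5]
                group
              have h7 := orderOf_dvd_iff_zpow_eq_one.mpr h6
              rw [hax] at h7; push_cast at h7
              rw [show (k-1)*(k+1) = k*(k+1) - (k+1) from by ring]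
              exact h7
            rcases dvd_split ha2 hkodd hk2 with hA | hB
            · obtain ⟨t, hto, hte⟩ := half_odd ha1 hA hk1
              have ha3 : 3 ≤ a := by
                by_contra h3
                have ha2' : a = 2 := by omega
                apply hdone
                rw [ha2']
                obtain ⟨s, hs⟩ := hto
                rw [ha2'] at hte
                norm_num at hte ⊢
                omega
              obtain ⟨t', hot', ht'⟩ : ∃ t', Odd t' ∧ k + 1 = 2 * t' := by
                refine ⟨2^(a-2)*t + 1, ?_, ?_⟩
                · refine Even.add_one (Even.mul_right ⟨2^(a-3), ?_⟩ t)
                  rw [show (2:ℤ)^(a-3) + 2^(a-3) = 2 * 2^(a-3) from by ring, ← pow_succ']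
                  congr 1
                  omega
                · have hp : (2:ℤ)^(a-1) = 2*2^(a-2) := by rw [← pow_succ']; congr 1; omega
                  linear_combination hte + t*hp
              have hX2 : (F xt) ^ (2:ℕ) = 1 := by
                have hdvd1 : (orderOf (F xt) : ℤ) ∣ k + 1 := orderOf_dvd_iff_zpow_eq_one.mpr hXk1
                have hdvd2 : (orderOf (F xt) : ℤ) ∣ (2:ℤ)^a := orderOf_dvd_iff_zpow_eq_one.mpr hXord
                have hdvd2' : orderOf (F xt) ∣ 2^a := by exact_mod_cast hdvd2
                obtain ⟨c, hc, hceq⟩ := (Nat.dvd_prime_pow Nat.prime_two).mp hdvd2'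
                have hc1 : c ≤ 1 := by
                  by_contra hcg
                  push_neg at hcg
                  have h5' : ((2:ℕ)^c : ℤ) ∣ 2*t' := by
                    rw [← ht']
                    exact_mod_cast (hceq ▸ hdvd1)
                  have h4' : (4:ℤ) ∣ ((2:ℕ)^c : ℤ) := by
                    exact_mod_cast (pow_dvd_pow 2 (by omega : 2 ≤ c) : (2:ℕ)^2 ∣ 2^c)
                  have h4 : (4:ℤ) ∣ 2*t' := dvd_trans h4' h5'
                  obtain ⟨s, hs⟩ := h4
                  obtain ⟨s2, hs2⟩ := hot'
                  omega
                apply orderOf_dvd_iff_pow_eq_one.mp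
                rw [hceq]
                exact pow_dvd_pow 2 hc1
              have h2i : i + i = 0 := by
                rw [hXc, pow_two, r_mul_r, one_def] at hX2
                injection hX2
              apply himqF
              rw [hXc, hYc]
              exact r_central h2i (sr j)
            · obtain ⟨t, hot, hte⟩ := half_odd ha1 hB hdone
              have ha3 : 3 ≤ a := by
                by_contra h3
                have ha2' : a = 2 := by omega
                apply hk1
                rw [ha2']
                obtain ⟨s, hs⟩ := hot
                rw [ha2'] at hte
                norm_num at hte ⊢
                omega
              have hxk1z : x ^ (k+1:ℤ) = z := by
                rw [hte, zpow_mul]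
                exact invol_zpow hz2 hot
              have hzN : z ∈ Subgroup.zpowers (y^2) := by rw [← hxk1z]; exact hN
              obtain ⟨b, hby⟩ := hfin2 y
              have hb1 : 1 ≤ b := by
                by_contra hb
                have hb0 : b = 0 := by omega
                rw [hb0, pow_zero] at hby
                have hyy1 : y = 1 := orderOf_eq_one_iff.mp hby
                apply hz1
                rw [hyy1, one_pow, Subgroup.zpowers_one_eq_bot] at hzN
                exact Subgroup.mem_bot.mp hzN
              obtain ⟨m, hm⟩ := Subgroup.mem_zpowers_iff.mp hzN
              have hmy : y ^ (2*m : ℤ) = z := by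
                rw [zpow_mul,
                  show y ^ (2:ℤ) = y^2 from by
                    rw [show ((2:ℤ)) = ((2:ℕ):ℤ) from by norm_num, zpow_natCast]]
                exact hm
              have hzζ : z = y ^ ((2:ℤ)^(b-1)) := invol_in_cyclic hb1 hby hz1 hz2 hmy
              have huy : y⁻¹ * u * y = u⁻¹ := by
                rw [hudef, hconjm, ← zpow_neg]
                apply zpow_eq_of_dvd
                rw [hax]; push_cast
                rw [show k * 2^(a-2) - -(2^(a-2)) = 2^(a-2)*(k+1) from by ring, hte]
                refine ⟨2^(a-3)*t, ?_⟩
                rw [show (2:ℤ)^(a-2) * (2^(a-1)*t) = (2^(a-2)*2^(a-1))*t from by ring,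
                  ← pow_add, show (2:ℤ)^a * (2^(a-3)*t) = (2^a*2^(a-3))*t from by ring, ← pow_add]
                congr 2
                omega
              have hb2 : 2 ≤ b := by
                by_contra hb
                have hb1' : b = 1 := by omega
                have hy2 : y^2 = 1 := by
                  have h9 := pow_orderOf_eq_one y
                  rwa [hby, hb1', pow_one] at h9
                apply hz1
                rw [hy2, Subgroup.zpowers_one_eq_bot] at hzN
                exact Subgroup.mem_bot.mp hzN
              by_cases hb3 : 3 ≤ b
              · set w := y ^ ((2:ℤ)^(b-2)) with hwdef
                have hwy : w ∈ Subgroup.zpowers y :=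
                  Subgroup.zpow_mem _ (Subgroup.mem_zpowers y) _
                have hwsq : w ^ 2 = z := by
                  rw [hzζ, hwdef, ← zpow_natCast (y ^ ((2:ℤ)^(b-2))) 2, ← zpow_mul]
                  congr 1
                  push_cast
                  rw [← pow_succ]
                  congr 1
                  omega
                have hy2x : (y^2)⁻¹ * x * y^2 = x := by
                  have e1 : (y^2)⁻¹ * x * y^2 = y⁻¹ * (y⁻¹ * x * y) * y := by simp only [pow_two]; group
                  rw [e1, ← hk, hconjm]
                  calc x ^ (k*k) = x ^ (1:ℤ) := zpow_eq_of_dvd (by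
                        rw [hax]; push_cast
                        rw [show k*k - 1 = (k-1)*(k+1) from by ring]
                        exact hk2)
                  _ = x := zpow_one x
                have hcxy2 : Commute (y^2) x := by
                  have h9 : y^2 * ((y^2)⁻¹ * x * y^2) = y^2 * x := by rw [hy2x]
                  have h10 : y^2 * ((y^2)⁻¹ * x * y^2) = x * y^2 := by simp only [pow_two]; group
                  exact h9.symm.trans h10
                have hcy2 : ∀ g, Commute (y^2) g :=
                  fun g => commute_all hgen hcxy2 ((Commute.refl y).pow_left 2) g
                have hwc : ∀ g, Commute w g := by
                  intro g
                  have hwe : w = (y^2) ^ ((2:ℤ)^(b-3)) := by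
                    rw [hwdef, ← zpow_natCast y 2, ← zpow_mul]
                    congr 1
                    push_cast
                    rw [← pow_succ']
                    congr 1
                    omega
                  rw [hwe]
                  exact (hcy2 g).zpow_left _
                apply keyW hgood' hwy hwc huy ?_ ?_ ?_
                · have hcuw : Commute u w := (hwc u).symm
                  rw [hcuw.mul_pow, hu2z, hwsq, ← pow_two, hz2]
                · rw [hu2z]; exact hz1
                · rw [hwsq]; exact hz1
              · have hb2' : b = 2 := by omega
                have hy2z : y^2 = z := by
                  rw [hzζ, hb2']
                  norm_num
                have hyxy : y * x * y⁻¹ = x ^ (k:ℤ) := by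
                  have hLk : (y*x*y⁻¹) ^ (k:ℤ) = x := by
                    rw [conj_zpow, hk]
                    group
                  have hordL : orderOf (y*x*y⁻¹) = orderOf x := orderOf_conj' y x
                  have h8 : (y*x*y⁻¹) ^ (k*k : ℤ) = x ^ (k:ℤ) := by rw [zpow_mul, hLk]
                  have h9 : (y*x*y⁻¹) ^ (k*k : ℤ) = (y*x*y⁻¹) ^ (1:ℤ) := by
                    apply zpow_eq_of_dvd
                    rw [hordL, hax]; push_cast
                    rw [show k*k - 1 = (k-1)*(k+1) from by ring]
                    exact hk2
                  rw [h9, zpow_one] at h8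
                  exact h8
                apply pairBot hgood' ?_ hx2ne ?_ hxy
                · have e1 : (x*y)^2 = x * (y*x*y⁻¹) * y^2 := by simp only [pow_two]; group
                  rw [e1, hyxy, hy2z]
                  have e2 : x * x^(k:ℤ) = x ^ (k+1:ℤ) := by
                    rw [zpow_add, zpow_one]
                    exact ((Commute.refl x).zpow_right k).eq
                  rw [show x * x^(k:ℤ) * z = (x * x^(k:ℤ)) * z from rfl, e2, hxk1z,
                    ← pow_two, hz2]
                · rw [hy2z]; exact hz1
  -- ===== after key =====
  have hxk_inv : y⁻¹ * x * y = x⁻¹ := by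
    rw [← hk]
    calc x ^ (k:ℤ) = x ^ (-1:ℤ) := zpow_eq_of_dvd (by
          rw [hax]; push_cast
          rw [show k - (-1) = k + 1 from by ring]
          exact key)
    _ = x⁻¹ := by rw [zpow_neg, zpow_one]
  have hk2 : (2:ℤ)^a ∣ (k-1)*(k+1) := Dvd.dvd.mul_left key (k-1)
  refine ⟨?_, ?_, hxk_inv⟩
  · rw [hax]
    calc (4:ℕ) = 2^2 := by norm_num
    _ ≤ 2^a := Nat.pow_le_pow_right (by norm_num) ha2
  · by_contra h4
    push_neg at h4
    obtain ⟨b, hby⟩ := hfin2 y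
    have hb3 : 3 ≤ b := by
      by_contra hb
      have h5 : (2:ℕ)^b ≤ 2^2 := Nat.pow_le_pow_right (by norm_num) (by omega)
      rw [hby] at h4
      omega
    have hb1 : (1:ℕ) ≤ b := by omega
    set ζ := y ^ ((2:ℤ)^(b-1)) with hζdef
    have hζ2 : ζ^2 = 1 := half_sq hby hb1
    have hζ1 : ζ ≠ 1 := half_ne hby hb1
    set w := y ^ ((2:ℤ)^(b-2)) with hwdef
    have hwy : w ∈ Subgroup.zpowers y := Subgroup.zpow_mem _ (Subgroup.mem_zpowers y) _
    have hwsq : w^2 = ζ := by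
      rw [hζdef, hwdef, ← zpow_natCast (y ^ ((2:ℤ)^(b-2))) 2, ← zpow_mul]
      congr 1
      push_cast
      rw [← pow_succ]
      congr 1
      omega
    have hy2x : (y^2)⁻¹ * x * y^2 = x := by
      have e1 : (y^2)⁻¹ * x * y^2 = y⁻¹ * (y⁻¹ * x * y) * y := by simp only [pow_two]; group
      rw [e1, ← hk, hconjm]
      calc x ^ (k*k) = x ^ (1:ℤ) := zpow_eq_of_dvd (by
            rw [hax]; push_cast
            rw [show k*k - 1 = (k-1)*(k+1) from by ring]
            exact hk2)
      _ = x := zpow_one x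
    have hcxy2 : Commute (y^2) x := by
      have h9 : y^2 * ((y^2)⁻¹ * x * y^2) = y^2 * x := by rw [hy2x]
      have h10 : y^2 * ((y^2)⁻¹ * x * y^2) = x * y^2 := by simp only [pow_two]; group
      exact h9.symm.trans h10
    have hcy2 : ∀ g, Commute (y^2) g :=
      fun g => commute_all hgen hcxy2 ((Commute.refl y).pow_left 2) g
    have hwc : ∀ g, Commute w g := by
      intro g
      have hwe : w = (y^2) ^ ((2:ℤ)^(b-3)) := by
        rw [hwdef, ← zpow_natCast y 2, ← zpow_mul]
        congr 1
        push_cast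
        rw [← pow_succ']
        congr 1
        omega
      rw [hwe]
      exact (hcy2 g).zpow_left _
    have huy : y⁻¹ * u * y = u⁻¹ := by
      rw [hudef, hconjm, ← zpow_neg]
      apply zpow_eq_of_dvd
      rw [hax]; push_cast
      rw [show k * 2^(a-2) - -(2^(a-2)) = 2^(a-2)*(k+1) from by ring]
      exact Dvd.dvd.mul_left key _
    have hzeta_false : ζ = z → False := by
      intro hζz
      apply keyW hgood' hwy hwc huy ?_ ?_ ?_
      · have hcuw : Commute u w := (hwc u).symm
        rw [hcuw.mul_pow, hu2z, hwsq, hζz, ← pow_two, hz2]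
      · rw [hu2z]; exact hz1
      · rw [hwsq, hζz]; exact hz1
    obtain ⟨hn3, hdisj3⟩ := hpairs (x*w) y
    haveI := hn3.subgroupOf (Subgroup.closure {x*w, y})
    set H3 := Subgroup.closure ({x*w, y} : Set G) with hH3
    have hxwH : x*w ∈ H3 := Subgroup.subset_closure (by left; rfl)
    have hyH3 : y ∈ H3 := Subgroup.subset_closure (by right; rfl)
    have hwH3 : w ∈ H3 := (Subgroup.zpowers_le.mpr hyH3) hwy
    have hxH3 : x ∈ H3 := by
      have he : (x*w)*w⁻¹ = x := by group
      rw [← he]; exact mul_mem hxwH (inv_mem hwH3)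
    set K3 := (Subgroup.zpowers ((x*w)^2)).subgroupOf H3 with hK3
    have hker3 : ∀ g : ↥H3, (QuotientGroup.mk' K3 g = 1) ↔
        (g : G) ∈ Subgroup.zpowers ((x*w)^2) := by
      intro g
      rw [show QuotientGroup.mk' K3 g = (g : ↥H3 ⧸ K3) from rfl, QuotientGroup.eq_one_iff,
        hK3, Subgroup.mem_subgroupOf]
    have hxw2 : (x*w)^2 = x^2 * ζ := by
      rw [((hwc x).symm).mul_pow, hwsq]
    have hcζ : Commute (x^2) ζ := by rw [← hwsq]; exact ((hwc (x^2)).pow_left 2).symm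
    have hζM : ζ ∈ Subgroup.zpowers ((x*w)^2) → False := by
      intro hmem
      rw [hxw2] at hmem
      obtain ⟨t, ht⟩ := Subgroup.mem_zpowers_iff.mp hmem
      have hsplit : (x^2*ζ)^(t:ℤ) = x^(2*t:ℤ) * ζ^(t:ℤ) := by
        rw [hcζ.mul_zpow]
        congr 1
        rw [← zpow_natCast x 2, ← zpow_mul]
        norm_num
      rw [hsplit] at ht
      rcases Int.even_or_odd t with hev | hod
      · rw [invol_zpow_even hζ2 hev, mul_one] at ht
        exact hzeta_false (invol_in_cyclic ha1 hax hζ1 hζ2 ht)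
      · rw [invol_zpow hζ2 hod] at ht
        have h6 : x ^ (2*t:ℤ) = 1 := by
          nth_rewrite 2 [← one_mul ζ] at ht
          exact mul_right_cancel ht
        have hdvd := orderOf_dvd_iff_zpow_eq_one.mpr h6
        rw [hax] at hdvd; push_cast at hdvd
        obtain ⟨s, hos, hse⟩ := two_half ha1 hdvd (by
          intro hdd
          have h2t : (2:ℤ) ∣ t :=
            dvd_trans ⟨2^(a-1), by rw [← pow_succ']; congr 1; omega⟩ hdd
          obtain ⟨s2, hs2⟩ := h2t
          obtain ⟨s3, hs3⟩ := hod
          omega)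
        have h2t : (2:ℤ) ∣ t := by
          rw [hse]
          exact Dvd.dvd.mul_right ⟨2^(a-2), by rw [← pow_succ']; congr 1; omega⟩ s
        obtain ⟨s2, hs2⟩ := h2t
        obtain ⟨s3, hs3⟩ := hod
        omega
    set xt3 : ↥H3 := ⟨x, hxH3⟩ with hxt3
    set yt3 : ↥H3 := ⟨y, hyH3⟩ with hyt3
    set wt3 : ↥H3 := ⟨w, hwH3⟩ with hwt3
    rcases hdisj3 with hab3 | ⟨d3, hd3, ⟨E3⟩⟩
    · have hcm : Commute (QuotientGroup.mk' K3 xt3) (QuotientGroup.mk' K3 yt3) := hab3 _ _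
      have h1 : QuotientGroup.mk' K3 (yt3⁻¹ * xt3 * yt3 * xt3⁻¹) = 1 := by
        simp only [map_mul, map_inv]
        rw [mul_assoc, ← hcm.inv_left.eq]
        group
      have hq : y⁻¹ * x * y * x⁻¹ ∈ Subgroup.zpowers ((x*w)^2) := (hker3 _).mp h1
      have hq2 : x ^ (-2:ℤ) ∈ Subgroup.zpowers ((x*w)^2) := by
        have e : y⁻¹*x*y*x⁻¹ = x^(-2:ℤ) := by rw [hxk_inv]; group
        rwa [e] at hq
      rw [hxw2] at hq2
      obtain ⟨t, ht⟩ := Subgroup.mem_zpowers_iff.mp hq2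
      have hsplit : (x^2*ζ)^(t:ℤ) = x^(2*t:ℤ) * ζ^(t:ℤ) := by
        rw [hcζ.mul_zpow]
        congr 1
        rw [← zpow_natCast x 2, ← zpow_mul]
        norm_num
      rw [hsplit] at ht
      rcases Int.even_or_odd t with hev | hod
      · rw [invol_zpow_even hζ2 hev, mul_one] at ht
        have h6 : x ^ (2*t + 2:ℤ) = 1 := by
          rw [zpow_add, ht]
          group
        have hdvd := orderOf_dvd_iff_zpow_eq_one.mpr h6
        rw [hax] at hdvd; push_cast at hdvd
        have h7 : (2:ℤ)^(a-1) ∣ t+1 := by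
          rw [show (2*t+2:ℤ) = 2*(t+1) from by ring,
            show ((2:ℤ)^a) = 2*2^(a-1) from by rw [← pow_succ']; congr 1; omega] at hdvd
          exact (mul_dvd_mul_iff_left (by norm_num : (2:ℤ) ≠ 0)).mp hdvd
        have h8 : (2:ℤ) ∣ t+1 :=
          dvd_trans ⟨2^(a-2), by rw [← pow_succ']; congr 1; omega⟩ h7
        obtain ⟨s, hs⟩ := h8
        obtain ⟨s2, hs2⟩ := hev
        omega
      · rw [invol_zpow hζ2 hod] at ht
        have hζx : x ^ (-2-2*t : ℤ) = ζ := by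
          have e1 : ζ = (x^(2*t:ℤ))⁻¹ * x^(-2:ℤ) := by rw [← ht]; group
          have e2 : x ^ (-2-2*t:ℤ) = (x^(2*t:ℤ))⁻¹ * x^(-2:ℤ) := by
            rw [← zpow_neg, ← zpow_add]
            congr 1
            ring
          rw [e2]
          exact e1.symm
        exact hzeta_false (invol_in_cyclic ha1 hax hζ1 hζ2 hζx)
    · set F3 := E3.toMonoidHom.comp (QuotientGroup.mk' K3) with hF3
      have hF3surj : Function.Surjective F3 :=
        E3.surjective.comp (QuotientGroup.mk'_surjective K3)
      have hF3c : ∀ gD, F3 wt3 * gD = gD * F3 wt3 := by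
        intro gD
        obtain ⟨ht', rfl⟩ := hF3surj gD
        rw [← map_mul, ← map_mul]
        congr 1
        exact Subtype.ext ((hwc (ht' : G)).eq)
      have hsq1 : F3 wt3 ^ 2 = 1 := central_sq_eq_one _ hF3c
      have hqq : QuotientGroup.mk' K3 (wt3 ^ 2) = 1 := by
        have h5 : F3 (wt3 ^ 2) = 1 := by rw [map_pow, hsq1]
        exact (MulEquiv.map_eq_one_iff E3).mp h5
      have hcoe := (hker3 _).mp hqq
      rw [Subgroup.coe_pow] at hcoe
      rw [hwsq] at hcoe
      exact hζM hcoe
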